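/- For every positive integer n, the function P_n : (0,1) → ℝ given by P_n(p) = binom(n, np)·p^(np)·(1-p)^(n(1-p)) is log-convex on (0,1), i.e. the function p ↦ log P_n(p) is convex on (0,1). -/

import Mathlib

open Real Filter Topology

/-- Generalized binomial coefficient `binom(n, α) = n! / (Γ(α+1)·Γ(n-α+1))`. -/
noncomputable def gbinom (n : ℕ) (a : ℝ) : ℝ :=
  (n.factorial : ℝ) / (Real.Gamma (a + 1) * Real.Gamma ((n : ℝ) - a + 1))

/-- The function `P_n(p) = binom(n, np) · p^(np) · (1-p)^(n(1-p))`. -/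
noncomputable def Pn (n : ℕ) (p : ℝ) : ℝ :=
  gbinom n ((n : ℝ) * p) * p ^ ((n : ℝ) * p) * (1 - p) ^ ((n : ℝ) * (1 - p))

open Finset


noncomputable def auxF (m : ℕ) (x : ℝ) : ℝ :=
  x * Real.log x + (∑ j ∈ Finset.range (m+1), Real.log (x + 1 + j))
    - (x + 1) * Real.log m - Real.log (m.factorial)

noncomputable def auxF1 (m : ℕ) (x : ℝ) : ℝ :=
  Real.log x + 1 + (∑ j ∈ Finset.range (m+1), (x + 1 + (j:ℝ))⁻¹) - Real.log m

noncomputable def auxF2 (m : ℕ) (x : ℝ) : ℝ :=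
  x⁻¹ - ∑ j ∈ Finset.range (m+1), ((x + 1 + (j:ℝ)) ^ 2)⁻¹

lemma auxF_hasDerivAt {m : ℕ} {x : ℝ} (hx : 0 < x) :
    HasDerivAt (auxF m) (auxF1 m x) x := by
  have h1 : HasDerivAt (fun x : ℝ => x * Real.log x) (Real.log x + 1) x := by
    have := (hasDerivAt_id x).fun_mul (Real.hasDerivAt_log hx.ne')
    simpa [mul_inv_cancel₀ hx.ne', add_comm] using this
  have h2 : HasDerivAt (fun x : ℝ => ∑ j ∈ Finset.range (m+1), Real.log (x + 1 + j))
      (∑ j ∈ Finset.range (m+1), (x + 1 + (j:ℝ))⁻¹) x := by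
    refine HasDerivAt.fun_sum fun j _ => ?_
    have hj : x + 1 + (j:ℝ) ≠ 0 := by positivity
    have := (((hasDerivAt_id x).add_const (1:ℝ)).add_const (j:ℝ)).log hj
    simpa using this
  have h3 : HasDerivAt (fun x : ℝ => (x + 1) * Real.log m) (Real.log m) x := by
    simpa using ((hasDerivAt_id x).add_const (1:ℝ)).mul_const (Real.log m)
  have := ((h1.add h2).sub h3).sub_const (Real.log (m.factorial))
  exact this

lemma auxF1_hasDerivAt {m : ℕ} {x : ℝ} (hx : 0 < x) :
    HasDerivAt (auxF1 m) (auxF2 m x) x := by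
  have h1 : HasDerivAt (fun x : ℝ => Real.log x + 1) x⁻¹ x :=
    (Real.hasDerivAt_log hx.ne').add_const 1
  have h2 : HasDerivAt (fun x : ℝ => ∑ j ∈ Finset.range (m+1), (x + 1 + (j:ℝ))⁻¹)
      (∑ j ∈ Finset.range (m+1), -((x + 1 + (j:ℝ)) ^ 2)⁻¹) x := by
    refine HasDerivAt.fun_sum fun j _ => ?_
    have hj : x + 1 + (j:ℝ) ≠ 0 := by positivity
    have := (((hasDerivAt_id x).add_const (1:ℝ)).add_const (j:ℝ)).fun_inv hj
    simpa [neg_div, one_div] using this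
  have := ((h1.add h2).sub_const (Real.log m))
  show HasDerivAt (fun x => auxF1 m x) (auxF2 m x) x
  simpa [auxF1, auxF2, Finset.sum_neg_distrib, sub_eq_add_neg] using this

lemma auxF2_nonneg {m : ℕ} {x : ℝ} (hx : 0 < x) : 0 ≤ auxF2 m x := by
  have key : ∑ j ∈ Finset.range (m+1), ((x + 1 + (j:ℝ)) ^ 2)⁻¹
      ≤ ∑ j ∈ Finset.range (m+1), ((x + (j:ℝ))⁻¹ - (x + ((j:ℝ)+1))⁻¹) := by
    refine Finset.sum_le_sum fun j _ => ?_
    have h1 : (0:ℝ) < x + j := by positivity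
    have h2 : (0:ℝ) < x + ((j:ℝ)+1) := by positivity
    rw [inv_sub_inv h1.ne' h2.ne']
    rw [div_eq_mul_inv, show x + ((j:ℝ)+1) - (x + j) = 1 by ring, one_mul]
    have hle : (x + 1 + (j:ℝ)) ^ 2 ≥ (x + j) * (x + ((j:ℝ)+1)) := by nlinarith
    exact inv_anti₀ (by positivity) hle
  have tel : ∑ j ∈ Finset.range (m+1), ((x + (j:ℝ))⁻¹ - (x + ((j:ℝ)+1))⁻¹)
      = x⁻¹ - (x + ((m:ℝ)+1))⁻¹ := by
    have := Finset.sum_range_sub' (fun j : ℕ => (x + (j:ℝ))⁻¹) (m+1)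
    simpa [Nat.cast_add, Nat.cast_one, add_assoc] using this
  have : ∑ j ∈ Finset.range (m+1), ((x + 1 + (j:ℝ)) ^ 2)⁻¹ ≤ x⁻¹ := by
    rw [tel] at key
    have : (0:ℝ) ≤ (x + ((m:ℝ)+1))⁻¹ := by positivity
    linarith
  simpa [auxF2, sub_nonneg] using this

lemma auxF_convex (m : ℕ) : ConvexOn ℝ (Set.Ioi (0:ℝ)) (auxF m) := by
  have hD : Convex ℝ (Set.Ioi (0:ℝ)) := convex_Ioi 0
  have hint : interior (Set.Ioi (0:ℝ)) = Set.Ioi 0 := interior_Ioi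
  refine convexOn_of_deriv2_nonneg hD ?_ ?_ ?_ ?_
  · intro x hx
    exact ((auxF_hasDerivAt hx).continuousAt).continuousWithinAt
  · rw [hint]; intro x hx
    exact ((auxF_hasDerivAt hx).differentiableAt).differentiableWithinAt
  · rw [hint]; intro x hx
    have hev : deriv (auxF m) =ᶠ[nhds x] auxF1 m := by
      filter_upwards [IsOpen.mem_nhds isOpen_Ioi hx] with y hy
      exact (auxF_hasDerivAt hy).deriv
    exact (((auxF1_hasDerivAt hx).congr_of_eventuallyEq hev).differentiableAt).differentiableWithinAt
  · rw [hint]; intro x hx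
    have hev : deriv (auxF m) =ᶠ[nhds x] auxF1 m := by
      filter_upwards [IsOpen.mem_nhds isOpen_Ioi hx] with y hy
      exact (auxF_hasDerivAt hy).deriv
    have : deriv (deriv (auxF m)) x = auxF2 m x := by
      rw [show deriv (deriv (auxF m)) x = deriv (auxF1 m) x from hev.deriv_eq]
      exact (auxF1_hasDerivAt hx).deriv
    simp only [Function.iterate_succ, Function.iterate_zero, Function.comp_apply, id]
    rw [this]
    exact auxF2_nonneg hx

lemma auxF_tendsto {x : ℝ} (hx : 0 < x) :
    Tendsto (fun m => auxF m x) atTop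
      (𝓝 (x * Real.log x - Real.log (Real.Gamma (x+1)))) := by
  have hGpos : 0 < Real.Gamma (x+1) := Real.Gamma_pos_of_pos (by linarith)
  have hlog : Tendsto (fun m => x * Real.log x - Real.log (Real.GammaSeq (x+1) m)) atTop
      (𝓝 (x * Real.log x - Real.log (Real.Gamma (x+1)))) :=
    tendsto_const_nhds.sub
      (((Real.continuousAt_log hGpos.ne').tendsto).comp (Real.GammaSeq_tendsto_Gamma (x+1)))
  refine hlog.congr' ?_
  filter_upwards [eventually_ge_atTop 1] with m hm
  have hm0 : (0:ℝ) < m := by exact_mod_cast hm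
  have hprod : ∀ j ∈ Finset.range (m+1), (x + 1 + (j:ℝ)) ≠ 0 := fun j _ => by positivity
  have hfact : ((m.factorial : ℝ)) ≠ 0 := by positivity
  have hrp : ((m:ℝ) ^ (x+1 : ℝ)) ≠ 0 := (Real.rpow_pos_of_pos hm0 _).ne'
  have hprodne : (∏ j ∈ Finset.range (m+1), (x + 1 + (j:ℝ))) ≠ 0 :=
    Finset.prod_ne_zero_iff.2 hprod
  rw [Real.GammaSeq, Real.log_div (by exact mul_ne_zero hrp hfact) hprodne,
    Real.log_mul hrp hfact, Real.log_rpow hm0, Real.log_prod hprod]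
  simp only [auxF]
  ring

lemma h_convex : ConvexOn ℝ (Set.Ioi (0:ℝ))
    (fun x => x * Real.log x - Real.log (Real.Gamma (x+1))) := by
  refine ⟨convex_Ioi 0, fun x hx y hy a b ha hb hab => ?_⟩
  have hmem : a • x + b • y ∈ Set.Ioi (0:ℝ) := (convex_Ioi 0) hx hy ha hb hab
  refine le_of_tendsto_of_tendsto' (auxF_tendsto hmem)
    (((auxF_tendsto hx).const_mul a).add ((auxF_tendsto hy).const_mul b)) fun m => ?_
  exact (auxF_convex m).2 hx hy ha hb hab

noncomputable def auxH (x : ℝ) : ℝ := x * Real.log x - Real.log (Real.Gamma (x+1))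

lemma auxH_convex : ConvexOn ℝ (Set.Ioi (0:ℝ)) auxH := h_convex

lemma convexOn_congr' {s : Set ℝ} {f g : ℝ → ℝ} (hf : ConvexOn ℝ s f)
    (h : ∀ x ∈ s, f x = g x) : ConvexOn ℝ s g :=
  ⟨hf.1, fun x hx y hy a b ha hb hab => by
    rw [← h _ hx, ← h _ hy, ← h _ (hf.1 hx hy ha hb hab)]
    exact hf.2 hx hy ha hb hab⟩

lemma Pn_log_eq (n : ℕ) (hn : 0 < n) {p : ℝ} (hp : p ∈ Set.Ioo (0:ℝ) 1) :
    Real.log (Pn n p) = Real.log (n.factorial) - (n:ℝ) * Real.log n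
      + auxH ((n:ℝ)*p) + auxH ((n:ℝ)*(1-p)) := by
  obtain ⟨hp0, hp1⟩ := hp
  have hq0 : (0:ℝ) < 1 - p := by linarith
  have hn0 : (0:ℝ) < n := by exact_mod_cast hn
  have hG1 : 0 < Real.Gamma ((n:ℝ)*p + 1) :=
    Real.Gamma_pos_of_pos (by positivity)
  have hG2 : 0 < Real.Gamma ((n:ℝ)*(1-p) + 1) :=
    Real.Gamma_pos_of_pos (by positivity)
  have hfact : (0:ℝ) < (n.factorial : ℝ) := by positivity
  have hB : (0:ℝ) < p ^ ((n:ℝ)*p) := Real.rpow_pos_of_pos hp0 _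
  have hC : (0:ℝ) < (1-p) ^ ((n:ℝ)*(1-p)) := Real.rpow_pos_of_pos hq0 _
  have hsub : (n:ℝ) - (n:ℝ)*p = (n:ℝ)*(1-p) := by ring
  have hA : (0:ℝ) < gbinom n ((n:ℝ)*p) := by
    rw [gbinom, hsub]; positivity
  rw [Pn, Real.log_mul (by positivity) hC.ne', Real.log_mul hA.ne' hB.ne',
    gbinom, hsub, Real.log_div hfact.ne' (by positivity),
    Real.log_mul hG1.ne' hG2.ne', Real.log_rpow hp0, Real.log_rpow hq0]
  simp only [auxH]
  rw [Real.log_mul hn0.ne' hp0.ne', Real.log_mul hn0.ne' hq0.ne']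
  ring

/-- For every positive integer `n`, the function `P_n` is log-convex on `(0,1)`,
i.e. `p ↦ log P_n(p)` is convex on `(0,1)`. -/
theorem Pn_logConvex (n : ℕ) (hn : 0 < n) :
    ConvexOn ℝ (Set.Ioo (0:ℝ) 1) (fun p => Real.log (Pn n p)) := by
  have hn0 : (0:ℝ) < n := by exact_mod_cast hn
  have A1 : ConvexOn ℝ (Set.Ioo (0:ℝ) 1) (fun p => auxH ((n:ℝ)*p)) := by
    refine ⟨convex_Ioo 0 1, fun x hx y hy a b ha hb hab => ?_⟩
    have h1 := auxH_convex.2 (Set.mem_Ioi.2 (mul_pos hn0 hx.1))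
      (Set.mem_Ioi.2 (mul_pos hn0 hy.1)) ha hb hab
    simp only [smul_eq_mul] at h1 ⊢
    have e : (n:ℝ)*(a*x+b*y) = a*((n:ℝ)*x)+b*((n:ℝ)*y) := by ring
    rw [e]; exact h1
  have A2 : ConvexOn ℝ (Set.Ioo (0:ℝ) 1) (fun p => auxH ((n:ℝ)*(1-p))) := by
    refine ⟨convex_Ioo 0 1, fun x hx y hy a b ha hb hab => ?_⟩
    have h1 := auxH_convex.2 (Set.mem_Ioi.2 (mul_pos hn0 (by linarith [hx.2] : (0:ℝ) < 1 - x)))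
      (Set.mem_Ioi.2 (mul_pos hn0 (by linarith [hy.2] : (0:ℝ) < 1 - y))) ha hb hab
    simp only [smul_eq_mul] at h1 ⊢
    have e : (n:ℝ)*(1-(a*x+b*y)) = a*((n:ℝ)*(1-x))+b*((n:ℝ)*(1-y)) := by
      linear_combination -(n:ℝ) * hab
    rw [e]; exact h1
  have hsum : ConvexOn ℝ (Set.Ioo (0:ℝ) 1)
      (fun p => (Real.log (n.factorial) - (n:ℝ) * Real.log n + auxH ((n:ℝ)*p))
        + auxH ((n:ℝ)*(1-p))) :=
    ((convexOn_const _ (convex_Ioo 0 1)).add A1).add A2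
  exact convexOn_congr' hsum (fun p hp => ((Pn_log_eq n hn hp).symm))
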